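/- For every z ∈ ℂ with z ≠ 0, the operator z·id − 𝒥 : W → W has a bounded linear inverse, and this inverse satisfies ‖(z·id − 𝒥)^{-1}‖ ≤ (1/|z|)·exp((b−a)/|z|). -/

import Mathlib

open MeasureTheory

set_option maxHeartbeats 1000000
set_option synthInstance.maxHeartbeats 400000

/-- Neumann series resolvent bound in an abstract complex Banach algebra. -/
lemma neumann_aux {A : Type*} [NormedRing A] [NormedAlgebra ℂ A] [CompleteSpace A]
    (J : A) (z : ℂ) (hz : z ≠ 0) (C : ℝ) (hC : 0 ≤ C)
    (hn : ∀ n : ℕ, ‖J ^ n‖ ≤ C ^ n / n.factorial) :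
    ∃ T : A, T * (z • 1 - J) = 1 ∧ (z • 1 - J) * T = 1 ∧
      ‖T‖ ≤ 1 / ‖z‖ * Real.exp (C / ‖z‖) := by
  set r : ℝ := ‖z‖ with hr
  have hr0 : 0 < r := by simpa [hr] using norm_pos_iff.mpr hz
  set X : A := z⁻¹ • J with hX
  have hXn : ∀ n : ℕ, ‖X ^ n‖ ≤ (C / r) ^ n / n.factorial := by
    intro n
    rw [hX, smul_pow, norm_smul]
    have h1 : ‖z⁻¹ ^ n‖ = (1 / r) ^ n := by
      simp [norm_pow, hr, map_inv₀, one_div]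
    rw [h1]
    calc (1 / r) ^ n * ‖J ^ n‖ ≤ (1 / r) ^ n * (C ^ n / n.factorial) :=
          mul_le_mul_of_nonneg_left (hn n) (by positivity)
      _ = (C / r) ^ n / n.factorial := by
          rw [div_pow, div_pow, one_pow]
          ring
  have hsummand : Summable (fun n : ℕ => (C / r) ^ n / n.factorial) :=
    Real.summable_pow_div_factorial _
  have hnorms : Summable (fun n : ℕ => ‖X ^ n‖) :=
    Summable.of_nonneg_of_le (fun n => norm_nonneg _) hXn hsummand
  have hsum : Summable (fun n : ℕ => X ^ n) := hnorms.of_norm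
  set S : A := ∑' n : ℕ, X ^ n with hS
  have hsum1 : Summable (fun n : ℕ => X ^ (n + 1)) := (summable_nat_add_iff 1).2 hsum
  have h1 : ∑' n : ℕ, X ^ (n + 1) = S - 1 := by
    have h := Summable.tsum_eq_zero_add hsum
    rw [pow_zero] at h
    rw [hS, h, add_sub_cancel_left]
  have hmulL : (1 - X) * S = 1 := by
    rw [hS, ← hsum.tsum_mul_left (1 - X)]
    have he : ∀ n : ℕ, (1 - X) * X ^ n = X ^ n - X ^ (n + 1) := by
      intro n; rw [sub_mul, one_mul, pow_succ']
    simp_rw [he]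
    rw [Summable.tsum_sub hsum hsum1, h1, sub_sub_cancel]
  have hmulR : S * (1 - X) = 1 := by
    rw [hS, ← hsum.tsum_mul_right (1 - X)]
    have he : ∀ n : ℕ, X ^ n * (1 - X) = X ^ n - X ^ (n + 1) := by
      intro n; rw [mul_sub, mul_one, pow_succ]
    simp_rw [he]
    rw [Summable.tsum_sub hsum hsum1, h1, sub_sub_cancel]
  have hid : (z • (1 : A) - J) = z • (1 - X) := by
    rw [smul_sub, hX, smul_smul, mul_inv_cancel₀ hz, one_smul]
  refine ⟨z⁻¹ • S, ?_, ?_, ?_⟩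
  · rw [hid, smul_mul_assoc, mul_smul_comm, smul_smul, inv_mul_cancel₀ hz, one_smul, hmulR]
  · rw [hid, smul_mul_assoc, mul_smul_comm, smul_smul, mul_inv_cancel₀ hz, one_smul, hmulL]
  · have hSn : ‖S‖ ≤ Real.exp (C / r) := by
      calc ‖S‖ ≤ ∑' n : ℕ, ‖X ^ n‖ := norm_tsum_le_tsum_norm hnorms
        _ ≤ ∑' n : ℕ, (C / r) ^ n / n.factorial := Summable.tsum_le_tsum hXn hnorms hsummand
        _ = Real.exp (C / r) := by
            rw [Real.exp_eq_exp_ℝ, NormedSpace.exp_eq_tsum_div]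
    calc ‖z⁻¹ • S‖ = ‖z⁻¹‖ * ‖S‖ := norm_smul _ _
      _ ≤ (1 / r) * Real.exp (C / r) := by
          have h2 : ‖z⁻¹‖ = 1 / r := by simp [hr, one_div]
          rw [h2]
          gcongr
      _ = 1 / ‖z‖ * Real.exp (C / ‖z‖) := by rw [hr]

theorem stmt_1 (a b : ℝ) (hab : a < b)
    (J : C(Set.Icc a b, ℂ) →L[ℂ] C(Set.Icc a b, ℂ))
    (hJ : ∀ g : C(Set.Icc a b, ℂ), ∀ x : Set.Icc a b,
      J g x = ∫ t in a..(x : ℝ), Set.IccExtend hab.le (⇑g) t)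
    (z : ℂ) (hz : z ≠ 0) :
    ∃ T : C(Set.Icc a b, ℂ) →L[ℂ] C(Set.Icc a b, ℂ),
      (∀ g, T (z • g - J g) = g) ∧ (∀ g, z • T g - J (T g) = g) ∧
      ‖T‖ ≤ 1 / ‖z‖ * Real.exp ((b - a) / ‖z‖) := by
  have hba : (0:ℝ) ≤ b - a := sub_nonneg.2 hab.le
  have key : ∀ (n : ℕ) (g : C(Set.Icc a b, ℂ)) (x : Set.Icc a b),
      ‖(J ^ n) g x‖ ≤ ‖g‖ * ((x : ℝ) - a) ^ n / n.factorial := by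
    intro n
    induction n with
    | zero =>
      intro g x
      simpa using g.norm_coe_le_norm x
    | succ n ih =>
      intro g x
      have hxa : a ≤ (x : ℝ) := x.2.1
      have hpow : (J ^ (n + 1)) g = J ((J ^ n) g) := by
        rw [pow_succ', ContinuousLinearMap.mul_apply]
      rw [hpow, hJ]
      have hcont : Continuous (Set.IccExtend hab.le (⇑((J ^ n) g))) :=
        ((J ^ n) g).continuous.Icc_extend'
      have hint1 : IntervalIntegrable
          (fun t => ‖Set.IccExtend hab.le (⇑((J ^ n) g)) t‖) volume a (x : ℝ) :=
        hcont.norm.intervalIntegrable _ _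
      have hint2 : IntervalIntegrable
          (fun t => ‖g‖ * (t - a) ^ n / n.factorial) volume a (x : ℝ) :=
        ((continuous_const.mul
          ((continuous_id.sub continuous_const).pow n)).div_const _).intervalIntegrable _ _
      calc ‖∫ t in a..(x : ℝ), Set.IccExtend hab.le (⇑((J ^ n) g)) t‖
          ≤ ∫ t in a..(x : ℝ), ‖Set.IccExtend hab.le (⇑((J ^ n) g)) t‖ :=
            intervalIntegral.norm_integral_le_integral_norm hxa
        _ ≤ ∫ t in a..(x : ℝ), ‖g‖ * (t - a) ^ n / n.factorial := by
            apply intervalIntegral.integral_mono_on hxa hint1 hint2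
            intro t ht
            have htm : t ∈ Set.Icc a b := ⟨ht.1, ht.2.trans x.2.2⟩
            rw [Set.IccExtend_of_mem hab.le _ htm]
            exact ih g ⟨t, htm⟩
        _ = ‖g‖ * ((x : ℝ) - a) ^ (n + 1) / (n + 1).factorial := by
            have he : ∀ t : ℝ, ‖g‖ * (t - a) ^ n / n.factorial
                = (‖g‖ / n.factorial) * (t - a) ^ n := by intro t; ring
            simp_rw [he]
            rw [intervalIntegral.integral_const_mul]
            rw [intervalIntegral.integral_comp_sub_right (fun u => u ^ n) a]
            rw [integral_pow, sub_self a, zero_pow n.succ_ne_zero, sub_zero,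
              Nat.factorial_succ]
            have hnf : (n.factorial : ℝ) ≠ 0 := Nat.cast_ne_zero.2 n.factorial_ne_zero
            have hn1 : ((n : ℝ) + 1) ≠ 0 := by positivity
            push_cast
            field_simp
  have hJn : ∀ n : ℕ, ‖J ^ n‖ ≤ (b - a) ^ n / n.factorial := by
    intro n
    have hnn : (0:ℝ) ≤ (b - a) ^ n / n.factorial :=
      div_nonneg (pow_nonneg hba n) (Nat.cast_nonneg _)
    apply ContinuousLinearMap.opNorm_le_bound _ hnn
    intro g
    have h0 : (0:ℝ) ≤ (b - a) ^ n / n.factorial * ‖g‖ := mul_nonneg hnn (norm_nonneg g)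
    rw [ContinuousMap.norm_le _ h0]
    intro x
    calc ‖(J ^ n) g x‖ ≤ ‖g‖ * ((x : ℝ) - a) ^ n / n.factorial := key n g x
      _ ≤ ‖g‖ * (b - a) ^ n / n.factorial := by
          gcongr
          · exact sub_nonneg.2 x.2.1
          · exact x.2.2
      _ = (b - a) ^ n / n.factorial * ‖g‖ := by ring
  obtain ⟨T, hTl, hTr, hTnorm⟩ := neumann_aux J z hz (b - a) hba hJn
  refine ⟨T, ?_, ?_, hTnorm⟩
  · intro g
    have h : z • g - J g = (z • (1 : C(Set.Icc a b, ℂ) →L[ℂ] C(Set.Icc a b, ℂ)) - J) g := by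
      simp [ContinuousLinearMap.sub_apply]
    rw [h, ← ContinuousLinearMap.mul_apply, hTl, ContinuousLinearMap.one_apply]
  · intro g
    have h : z • T g - J (T g)
        = ((z • (1 : C(Set.Icc a b, ℂ) →L[ℂ] C(Set.Icc a b, ℂ)) - J) * T) g := by
      simp [ContinuousLinearMap.mul_apply, ContinuousLinearMap.sub_apply]
    rw [h, hTr, ContinuousLinearMap.one_apply]
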